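/- Second Strang Lemma: Let V be a normed space with norm \|·\|_h, V_h ⊂ V a finite dimensional subspace, a_h a bilinear form on V that is coercive on V_h with constant α and bounded on V with constant M, and let u ∈ V, with u_h ∈ V_h satisfying a_h(u_h, v_h) = F(v_h) for all v_h ∈ V_h for a bounded linear functional F. Then \|u - u_h\|_h ≤ (1 + M/α) inf_{v_h ∈ V_h} \|u - v_h\|_h + (1/α) sup_{0 ≠ v_h ∈ V_h} |a_h(u, v_h) - F(v_h)| / \|v_h\|_h. -/
import Mathlib


/-- Second Strang Lemma: for a bilinear form `a_h` coercive (constant `α`) on a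
finite-dimensional subspace `V_h` and bounded (constant `M`) on `V`, and a
discrete solution `u_h ∈ V_h` of `a_h(u_h, v_h) = F(v_h)` for all `v_h ∈ V_h`,
the error is bounded by the approximation error plus the nonconformity error:
`‖u - u_h‖ ≤ (1 + M/α) inf_{v_h∈V_h} ‖u - v_h‖
  + (1/α) sup_{0≠v_h∈V_h} |a_h(u,v_h) - F(v_h)|/‖v_h‖`. -/
theorem stmt_13 {V : Type*} [NormedAddCommGroup V] [NormedSpace ℝ V]
    (Vh : Subspace ℝ V) [FiniteDimensional ℝ Vh]
    (ah : V →ₗ[ℝ] V →ₗ[ℝ] ℝ)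
    (α : ℝ) (hα : 0 < α) (hcoer : ∀ v ∈ Vh, ah v v ≥ α * ‖v‖ ^ 2)
    (M : ℝ) (hM : 0 ≤ M) (hbdd : ∀ u v : V, |ah u v| ≤ M * ‖u‖ * ‖v‖)
    (F : V →L[ℝ] ℝ) (u : V) (uh : V) (huh : uh ∈ Vh)
    (hdisc : ∀ vh ∈ Vh, ah uh vh = F vh) :
    ‖u - uh‖ ≤ (1 + M / α) * sInf {r : ℝ | ∃ vh ∈ Vh, r = ‖u - vh‖}
      + (1 / α) * sSup {r : ℝ | ∃ vh ∈ Vh, vh ≠ 0 ∧ r = |ah u vh - F vh| / ‖vh‖} := by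
  set Sset := {r : ℝ | ∃ vh ∈ Vh, vh ≠ 0 ∧ r = |ah u vh - F vh| / ‖vh‖} with hSset
  set S := sSup Sset with hSdef
  have hS0 : 0 ≤ S := Real.sSup_nonneg (by
    rintro r ⟨vh, _, hvh0, rfl⟩; positivity)
  have hbddS : BddAbove Sset := by
    refine ⟨M * ‖u‖ + ‖F‖, ?_⟩
    rintro r ⟨vh, _, hvh0, rfl⟩
    have hn : 0 < ‖vh‖ := norm_pos_iff.mpr hvh0
    rw [div_le_iff₀ hn]
    have h1 : |ah u vh - F vh| ≤ |ah u vh| + |F vh| := abs_sub _ _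
    have h2 : |ah u vh| ≤ M * ‖u‖ * ‖vh‖ := hbdd u vh
    have h3 : |F vh| ≤ ‖F‖ * ‖vh‖ := F.le_opNorm vh
    nlinarith
  have key : ∀ vh ∈ Vh, ‖u - uh‖ ≤ (1 + M / α) * ‖u - vh‖ + (1 / α) * S := by
    intro vh hvh
    have hwhm : uh - vh ∈ Vh := Vh.sub_mem huh hvh
    have hwb : ‖uh - vh‖ ≤ (1 / α) * S + (M / α) * ‖u - vh‖ := by
      by_cases h0 : uh - vh = 0
      · rw [h0, norm_zero]
        have : 0 ≤ (M / α) * ‖u - vh‖ := by positivity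
        have : 0 ≤ (1 / α) * S := by positivity
        linarith
      · have hwn : 0 < ‖uh - vh‖ := norm_pos_iff.mpr h0
        have h1 : α * ‖uh - vh‖ ^ 2 ≤ ah (uh - vh) (uh - vh) := hcoer _ hwhm
        have h2 : ah (uh - vh) (uh - vh)
            = (F (uh - vh) - ah u (uh - vh)) + ah (u - vh) (uh - vh) := by
          simp only [map_sub, LinearMap.sub_apply, hdisc uh huh, hdisc vh hvh]
          ring
        have h3 : |ah u (uh - vh) - F (uh - vh)| ≤ S * ‖uh - vh‖ := by
          have := le_csSup hbddS (show _ ∈ Sset from ⟨uh - vh, hwhm, h0, rfl⟩)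
          exact (div_le_iff₀ hwn).mp this
        have h4 : F (uh - vh) - ah u (uh - vh) ≤ |ah u (uh - vh) - F (uh - vh)| := by
          rw [abs_sub_comm]; exact le_abs_self _
        have h5 : ah (u - vh) (uh - vh) ≤ M * ‖u - vh‖ * ‖uh - vh‖ :=
          (le_abs_self _).trans (hbdd _ _)
        have h6 : α * ‖uh - vh‖ ≤ S + M * ‖u - vh‖ := by nlinarith
        have h7 : ‖uh - vh‖ ≤ (S + M * ‖u - vh‖) / α :=
          (le_div_iff₀ hα).mpr (by linarith)
        have h8 : (S + M * ‖u - vh‖) / α = (1 / α) * S + (M / α) * ‖u - vh‖ := by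
          ring
        linarith
    have htr : ‖u - uh‖ ≤ ‖u - vh‖ + ‖uh - vh‖ := by
      calc ‖u - uh‖ = ‖(u - vh) - (uh - vh)‖ := by
            rw [sub_sub_sub_cancel_right]
        _ ≤ ‖u - vh‖ + ‖uh - vh‖ := norm_sub_le _ _
    have hMα : 0 ≤ M / α := by positivity
    calc ‖u - uh‖ ≤ ‖u - vh‖ + ((1 / α) * S + (M / α) * ‖u - vh‖) := by linarith
      _ = (1 + M / α) * ‖u - vh‖ + (1 / α) * S := by ring
  have hc : (0 : ℝ) < 1 + M / α := by positivity
  have hAne : {r : ℝ | ∃ vh ∈ Vh, r = ‖u - vh‖}.Nonempty :=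
    ⟨‖u - 0‖, 0, Vh.zero_mem, rfl⟩
  have hlow : (‖u - uh‖ - (1 / α) * S) / (1 + M / α)
      ≤ sInf {r : ℝ | ∃ vh ∈ Vh, r = ‖u - vh‖} := by
    apply le_csInf hAne
    rintro r ⟨vh, hvh, rfl⟩
    rw [div_le_iff₀ hc]
    have := key vh hvh
    nlinarith
  rw [div_le_iff₀ hc] at hlow
  nlinarith [hlow]
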